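/- Let (𝔤, 𝔥) be a Lie algebra pair and ∇ : 𝔤 → End(𝔤/𝔥) a linear map extending the natural 𝔥-action. The induced cochain 𝔥 → Hom(𝔤/𝔥, End(𝔤/𝔥)), a ↦ R^∇(a) with R^∇(a)(l̄) = [∇(a),∇(l)] − ∇([a,l]), is a Chevalley–Eilenberg 1-cocycle: for all a, b ∈ 𝔥, a·R^∇(b) − b·R^∇(a) − R^∇([a,b]) = 0, where 𝔥 acts on Hom(𝔤/𝔥, End(𝔤/𝔥)) by the natural tensor action (a·μ)(x̄) = [∇(a), μ(x̄)] − μ(a·x̄). -/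

import Mathlib

/-- The Atiyah cochain of a linear map `D : 𝔤 → End(𝔤/𝔥)`, computed on representatives. -/
def atiyahR {k L Q : Type*} [Field k] [LieRing L] [LieAlgebra k L]
    [AddCommGroup Q] [Module k Q]
    (D : L →ₗ[k] Module.End k Q) (c l : L) : Module.End k Q :=
  D c * D l - D l * D c - D ⁅c, l⁆

/-- For `∇ : 𝔤 → End(𝔤/𝔥)` extending the natural `𝔥`-action, the Atiyah
cochain `a ↦ R^∇(a)` is a Chevalley–Eilenberg 1-cocycle: for all `a, b ∈ 𝔥`,
`a·R^∇(b) − b·R^∇(a) − R^∇([a,b]) = 0`, where `(a·μ)(x̄) = [∇(a), μ(x̄)] − μ(a·x̄)`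
(here written on representatives `l ∈ 𝔤`, with `a·l̄ = overline{[a,l]}`). -/
theorem stmt9 {k L : Type*} [Field k] [LieRing L] [LieAlgebra k L]
    (H : LieSubalgebra k L)
    (D : L →ₗ[k] Module.End k (L ⧸ H.toSubmodule))
    (hext : ∀ a ∈ H, ∀ x : L, D a (H.toSubmodule.mkQ x) = H.toSubmodule.mkQ ⁅a, x⁆) :
    ∀ a ∈ H, ∀ b ∈ H, ∀ l : L,
      ((D a * atiyahR D b l - atiyahR D b l * D a) - atiyahR D b ⁅a, l⁆)
      - ((D b * atiyahR D a l - atiyahR D a l * D b) - atiyahR D a ⁅b, l⁆)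
      - atiyahR D ⁅a, b⁆ l = 0 := by
  intro a ha b hb l
  -- First: the curvature vanishes on 𝔥 × 𝔥, i.e. D⁅a,b⁆ = D a * D b - D b * D a.
  have hS : D ⁅a, b⁆ = D a * D b - D b * D a := by
    apply LinearMap.ext
    intro q
    obtain ⟨x, rfl⟩ := H.toSubmodule.mkQ_surjective q
    simp only [LinearMap.sub_apply, Module.End.mul_apply,
      hext a ha, hext b hb, hext ⁅a, b⁆ (H.lie_mem ha hb)]
    rw [← map_sub, lie_lie]
  have hJ : D ⁅a, ⁅b, l⁆⁆ = D ⁅⁅a, b⁆, l⁆ + D ⁅b, ⁅a, l⁆⁆ := by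
    rw [← map_add]
    congr 1
    rw [lie_lie]
    abel
  simp only [atiyahR, hS, hJ]
  simp only [mul_sub, sub_mul, mul_assoc]
  abel
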